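/- arXiv:2409.03177 — 3 statements merged into one kernel-verified Lean document; each statement's English description precedes it below -/
import Mathlib

section
/- Let q be a real number with |q| < 1 (so that all q-integers [m]_q = (1-q^m)/(1-q) are positive). Then for all 0 ≤ k ≤ n, the Gaussian binomial coefficient satisfies binom(n,k)_q ≥ b_q⁻¹, where b_q = ∏_{i=1}^∞ (1+|q|^i)/(1-|q|^i) (a finite positive constant). -/
open Real Finset

/-- The Gaussian binomial coefficient
`binom(n,k)_q = ∏_{i=1}^k (1 - q^{n-i+1})/(1 - q^i)`. -/
noncomputable def qbinom (q : ℝ) (n k : ℕ) : ℝ :=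
  ∏ i ∈ Finset.range k, (1 - q ^ (n - i)) / (1 - q ^ (i + 1))

/-- for `|q| < 1` and `0 ≤ k ≤ n`, the constant
`b_q = ∏_{i=1}^∞ (1+|q|^i)/(1-|q|^i)` is positive (and finite), and
`binom(n,k)_q ≥ b_q⁻¹`. -/
theorem qbinom_ge_inv_bq (q : ℝ) (hq : |q| < 1) (n k : ℕ) (hk : k ≤ n) :
    0 < ∏' i : ℕ, (1 + |q| ^ (i + 1)) / (1 - |q| ^ (i + 1)) ∧
    (∏' i : ℕ, (1 + |q| ^ (i + 1)) / (1 - |q| ^ (i + 1)))⁻¹ ≤ qbinom q n k := by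
  set r := |q| with hr
  have hr0 : 0 ≤ r := abs_nonneg q
  have hrlt : r < 1 := hq
  have ha0 : ∀ i : ℕ, 0 ≤ r ^ (i + 1) := fun i => pow_nonneg hr0 _
  have halt : ∀ i : ℕ, r ^ (i + 1) < 1 := fun i => pow_lt_one₀ hr0 hrlt (Nat.succ_ne_zero i)
  have haler : ∀ i : ℕ, r ^ (i + 1) ≤ r := fun i => by
    simpa using pow_le_pow_of_le_one hr0 hrlt.le (Nat.one_le_iff_ne_zero.2 (Nat.succ_ne_zero i))
  have hSa : Summable fun i : ℕ => r ^ (i + 1) := by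
    have := (summable_geometric_of_lt_one hr0 hrlt).mul_left r
    refine this.congr fun i => ?_
    ring
  have h1pos : ∀ i : ℕ, (0:ℝ) < 1 + r ^ (i + 1) := fun i => by linarith [ha0 i]
  have h2pos : ∀ i : ℕ, (0:ℝ) < 1 - r ^ (i + 1) := fun i => by linarith [halt i]
  have hlog1 : ∀ i : ℕ, 0 ≤ log (1 + r ^ (i + 1)) :=
    fun i => log_nonneg (by linarith [ha0 i])
  have hlog2 : ∀ i : ℕ, 0 ≤ -log (1 - r ^ (i + 1)) := fun i => by
    have := log_nonpos (by linarith [h2pos i] : (0:ℝ) ≤ 1 - r ^ (i+1))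
      (by linarith [ha0 i] : (1:ℝ) - r ^ (i+1) ≤ 1)
    linarith
  have hbd1 : ∀ i : ℕ, log (1 + r ^ (i + 1)) ≤ r ^ (i + 1) := fun i => by
    have := log_le_sub_one_of_pos (h1pos i)
    linarith
  have hbd2 : ∀ i : ℕ, -log (1 - r ^ (i + 1)) ≤ r ^ (i + 1) * (1 - r)⁻¹ := fun i => by
    have h2 := h2pos i
    have hinv : -log (1 - r ^ (i + 1)) = log (1 - r ^ (i + 1))⁻¹ := (Real.log_inv _).symm
    have hle := log_le_sub_one_of_pos (inv_pos.2 h2)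
    have h3 : (1 - r ^ (i + 1))⁻¹ - 1 = r ^ (i + 1) / (1 - r ^ (i + 1)) := by field_simp; ring
    have h4 : r ^ (i + 1) / (1 - r ^ (i + 1)) ≤ r ^ (i + 1) / (1 - r) :=
      div_le_div_of_nonneg_left (ha0 i) (by linarith) (by linarith [haler i])
    have h5 : r ^ (i + 1) / (1 - r) = r ^ (i + 1) * (1 - r)⁻¹ := div_eq_mul_inv _ _
    rw [hinv]
    linarith
  have hS1 : Summable fun i : ℕ => log (1 + r ^ (i + 1)) :=
    Summable.of_nonneg_of_le hlog1 hbd1 hSa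
  have hS2 : Summable fun i : ℕ => -log (1 - r ^ (i + 1)) :=
    Summable.of_nonneg_of_le hlog2 hbd2 (hSa.mul_right (1 - r)⁻¹)
  have hS2' : Summable fun i : ℕ => log (1 - r ^ (i + 1)) := by simpa using hS2.neg
  have hSlog : Summable fun i : ℕ => log ((1 + r ^ (i + 1)) / (1 - r ^ (i + 1))) := by
    refine (hS1.add hS2).congr fun i => ?_
    rw [Real.log_div (h1pos i).ne' (h2pos i).ne']; ring
  set L := ∑' i : ℕ, log ((1 + r ^ (i + 1)) / (1 - r ^ (i + 1))) with hL
  have hProd : HasProd (fun i : ℕ => (1 + r ^ (i + 1)) / (1 - r ^ (i + 1))) (Real.exp L) := by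
    have h := hSlog.hasSum.rexp
    have heq : rexp ∘ (fun i : ℕ => log ((1 + r ^ (i + 1)) / (1 - r ^ (i + 1)))) =
        fun i : ℕ => (1 + r ^ (i + 1)) / (1 - r ^ (i + 1)) :=
      funext fun i => Real.exp_log (div_pos (h1pos i) (h2pos i))
    rwa [heq] at h
  have htprod : (∏' i : ℕ, (1 + r ^ (i + 1)) / (1 - r ^ (i + 1))) = Real.exp L :=
    hProd.tprod_eq
  refine ⟨by rw [htprod]; exact Real.exp_pos L, ?_⟩
  rw [htprod, ← Real.exp_neg]
  have hLval : L = (∑' i : ℕ, log (1 + r ^ (i + 1))) - ∑' i : ℕ, log (1 - r ^ (i + 1)) := by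
    rw [hL, ← Summable.tsum_sub hS1 hS2']
    exact tsum_congr fun i => Real.log_div (h1pos i).ne' (h2pos i).ne'
  have hb : ∀ i ∈ Finset.range k, (0:ℝ) < 1 - q ^ (n - i) := by
    intro i hi
    have hi' : i < k := Finset.mem_range.1 hi
    have h2 : r ^ (n - i) < 1 := pow_lt_one₀ hr0 hrlt (by omega)
    have h1 : q ^ (n - i) ≤ r ^ (n - i) := by
      rw [hr, ← abs_pow]; exact le_abs_self _
    linarith
  have hnum : ∀ i ∈ Finset.range k, (0:ℝ) < 1 - r ^ (n - i) := by
    intro i hi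
    have hi' : i < k := Finset.mem_range.1 hi
    have : r ^ (n - i) < 1 := pow_lt_one₀ hr0 hrlt (by omega)
    linarith
  have hden : ∀ i : ℕ, (0:ℝ) < 1 - q ^ (i + 1) := by
    intro i
    have h1 : q ^ (i + 1) ≤ r ^ (i + 1) := by rw [hr, ← abs_pow]; exact le_abs_self _
    have := halt i
    linarith
  have hfac : ∀ i ∈ Finset.range k,
      (1 - r ^ (n - i)) / (1 + r ^ (i + 1)) ≤ (1 - q ^ (n - i)) / (1 - q ^ (i + 1)) := by
    intro i hi
    refine div_le_div₀ (hb i hi).le ?_ (hden i) ?_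
    · have h1 : -(r ^ (n - i)) ≤ q ^ (n - i) := by
        rw [hr, ← abs_pow]; exact neg_abs_le _
      have h2 : q ^ (n - i) ≤ r ^ (n - i) := by rw [hr, ← abs_pow]; exact le_abs_self _
      linarith
    · have h1 : -(r ^ (i + 1)) ≤ q ^ (i + 1) := by
        rw [hr, ← abs_pow]; exact neg_abs_le _
      linarith
  have hmid : (∏ i ∈ Finset.range k, (1 - r ^ (n - i)) / (1 + r ^ (i + 1))) ≤ qbinom q n k := by
    unfold qbinom
    refine Finset.prod_le_prod (fun i hi => ?_) hfac
    exact div_nonneg (hnum i hi).le (h1pos i).le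
  refine le_trans ?_ hmid
  have hexp : (∏ i ∈ Finset.range k, (1 - r ^ (n - i)) / (1 + r ^ (i + 1))) =
      Real.exp (∑ i ∈ Finset.range k, (log (1 - r ^ (n - i)) - log (1 + r ^ (i + 1)))) := by
    rw [Real.exp_sum]
    refine Finset.prod_congr rfl fun i hi => ?_
    rw [Real.exp_sub, Real.exp_log (hnum i hi), Real.exp_log (h1pos i)]
  rw [hexp]
  apply Real.exp_le_exp.2
  rw [hLval, neg_sub, Finset.sum_sub_distrib]
  have hA : (∑ i ∈ Finset.range k, log (1 + r ^ (i + 1))) ≤ ∑' i : ℕ, log (1 + r ^ (i + 1)) :=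
    Summable.sum_le_tsum _ (fun i _ => hlog1 i) hS1
  have hB : (∑' i : ℕ, log (1 - r ^ (i + 1))) ≤
      ∑ i ∈ Finset.range k, log (1 - r ^ (n - i)) := by
    have hre : (∑ i ∈ Finset.range k, log (1 - r ^ (n - i))) =
        ∑ j ∈ Finset.Ico (n - k) n, log (1 - r ^ (j + 1)) := by
      refine Finset.sum_bij' (fun i _ => n - 1 - i) (fun j _ => n - 1 - j) ?_ ?_ ?_ ?_ ?_
      · intro i hi; simp only [Finset.mem_range] at hi; simp only [Finset.mem_Ico]; omega
      · intro j hj; simp only [Finset.mem_Ico] at hj; simp only [Finset.mem_range]; omega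
      · intro i hi; simp only [Finset.mem_range] at hi
        show n - 1 - (n - 1 - i) = i; omega
      · intro j hj; simp only [Finset.mem_Ico] at hj
        show n - 1 - (n - 1 - j) = j; omega
      · intro i hi; simp only [Finset.mem_range] at hi
        have he : n - 1 - i + 1 = n - i := by omega
        show log (1 - r ^ (n - i)) = log (1 - r ^ (n - 1 - i + 1))
        rw [he]
    rw [hre]
    have hneg : (∑ j ∈ Finset.Ico (n - k) n, -log (1 - r ^ (j + 1))) ≤
        ∑' j : ℕ, -log (1 - r ^ (j + 1)) :=
      Summable.sum_le_tsum _ (fun j _ => hlog2 j) hS2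
    rw [tsum_neg, Finset.sum_neg_distrib] at hneg
    linarith
  linarith
end

section
/- Let q ∈ (-1,1) and n ∈ ℕ. Then ∑_{k=0}^{n} binom(n,k)_q² ≥ b_q⁻²·(n+1), where binom(n,k)_q is the Gaussian binomial coefficient and b_q = ∏_{i=1}^∞ (1+|q|^i)/(1-|q|^i). -/
open Finset Real

section aux
variable {x : ℝ} (hx0 : 0 ≤ x) (hx1 : x < 1)
include hx0 hx1

lemma aux_pos (i : ℕ) : 0 < 1 - x ^ (i + 1) := by
  have : x ^ (i+1) < 1 := pow_lt_one₀ hx0 hx1 (Nat.succ_ne_zero i)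
  linarith

lemma aux_one_le (i : ℕ) : 1 ≤ (1 + x ^ (i + 1)) / (1 - x ^ (i + 1)) := by
  rw [le_div_iff₀ (aux_pos hx0 hx1 i)]
  have := pow_nonneg hx0 (i+1)
  linarith

lemma aux_summable_log :
    Summable fun i : ℕ => Real.log ((1 + x ^ (i + 1)) / (1 - x ^ (i + 1))) := by
  have hsum : Summable fun i : ℕ => (2 * x / (1 - x)) * x ^ i :=
    (summable_geometric_of_lt_one hx0 hx1).mul_left _
  apply Summable.of_nonneg_of_le _ _ hsum
  · intro i
    exact Real.log_nonneg (aux_one_le hx0 hx1 i)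
  · intro i
    have hp := aux_pos hx0 hx1 i
    have ht : x ^ (i+1) ≤ x := by
      calc x ^ (i+1) ≤ x ^ 1 := pow_le_pow_of_le_one hx0 hx1.le (by omega)
      _ = x := pow_one x
    have h1x : 0 < 1 - x := by linarith
    have hlog : Real.log ((1 + x ^ (i + 1)) / (1 - x ^ (i + 1)))
        ≤ (1 + x ^ (i + 1)) / (1 - x ^ (i + 1)) - 1 :=
      Real.log_le_sub_one_of_pos (by positivity)
    have : (1 + x ^ (i + 1)) / (1 - x ^ (i + 1)) - 1 = 2 * x ^ (i+1) / (1 - x ^ (i+1)) := by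
      field_simp; ring
    rw [this] at hlog
    calc Real.log ((1 + x ^ (i + 1)) / (1 - x ^ (i + 1)))
        ≤ 2 * x ^ (i+1) / (1 - x ^ (i+1)) := hlog
      _ ≤ 2 * x ^ (i+1) / (1 - x) := by
          apply div_le_div_of_nonneg_left (by positivity) h1x (by linarith)
      _ = (2 * x / (1 - x)) * x ^ i := by
          rw [pow_succ]; ring
  
lemma aux_multipliable :
    Multipliable fun i : ℕ => (1 + x ^ (i + 1)) / (1 - x ^ (i + 1)) := by
  exact Real.multipliable_of_summable_log
    (fun i => by have := aux_pos hx0 hx1 i; positivity)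
    (aux_summable_log hx0 hx1)

end aux

/-- for `q ∈ (-1,1)` and `n ∈ ℕ`,
`∑_{k=0}^n binom(n,k)_q² ≥ b_q⁻² (n+1)`, where
`b_q = ∏_{i=1}^∞ (1+|q|^i)/(1-|q|^i)`. -/
theorem sum_qbinom_sq_ge (q : ℝ) (hq : |q| < 1) (n : ℕ) :
    ((∏' i : ℕ, (1 + |q| ^ (i + 1)) / (1 - |q| ^ (i + 1)))⁻¹) ^ 2 * (n + 1)
      ≤ ∑ k ∈ Finset.range (n + 1), (qbinom q n k) ^ 2 := by
  set x := |q| with hxdef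
  have hx0 : 0 ≤ x := abs_nonneg q
  set d : ℕ → ℝ := fun i => (1 + x ^ (i + 1)) / (1 - x ^ (i + 1)) with hd
  set P : ℝ := ∏' i : ℕ, d i with hP
  have hm : Multipliable d := aux_multipliable hx0 hq
  have h1d : ∀ i, 1 ≤ d i := aux_one_le hx0 hq
  have hmono : Monotone (fun k => ∏ i ∈ range k, d i) := by
    apply monotone_nat_of_le_succ
    intro k
    rw [Finset.prod_range_succ]
    nlinarith [h1d k, Finset.prod_pos (fun i (_ : i ∈ range k) => lt_of_lt_of_le one_pos (h1d i))]
  have hfin : ∀ k : ℕ, ∏ i ∈ range k, d i ≤ P := by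
    intro k
    apply ge_of_tendsto hm.hasProd.tendsto_prod_nat
    filter_upwards [Filter.eventually_ge_atTop k] with m hm
    exact hmono hm
  have hfinpos : ∀ k : ℕ, 0 < ∏ i ∈ range k, d i :=
    fun k => Finset.prod_pos fun i _ => lt_of_lt_of_le one_pos (h1d i)
  have hP0 : 0 < P := lt_of_lt_of_le (hfinpos 0) (hfin 0)
  -- key: P⁻¹ ≤ qbinom q n k for k ≤ n
  have key : ∀ k, k ≤ n → P⁻¹ ≤ qbinom q n k := by
    intro k hk
    have step1 : P⁻¹ ≤ (∏ i ∈ range k, d i)⁻¹ :=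
      inv_anti₀ (hfinpos k) (hfin k)
    refine step1.trans ?_
    rw [← Finset.prod_inv_distrib]
    -- ∏ (d i)⁻¹ ≤ qbinom
    have hinv : ∀ i, (d i)⁻¹ = (1 - x ^ (i + 1)) / (1 + x ^ (i + 1)) := by
      intro i; rw [hd]; rw [inv_div]
    unfold qbinom
    calc ∏ i ∈ range k, (d i)⁻¹
        = ∏ i ∈ range k, (1 - x ^ (i + 1)) / (1 + x ^ (i + 1)) := by
          exact Finset.prod_congr rfl fun i _ => hinv i
      _ ≤ ∏ i ∈ range k, (1 - x ^ (n - i)) / (1 + x ^ (i + 1)) := by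
          rw [Finset.prod_div_distrib, Finset.prod_div_distrib]
          have hden : (0:ℝ) < ∏ i ∈ range k, (1 + x ^ (i + 1)) :=
            Finset.prod_pos fun i _ => by positivity
          have hnum : ∏ i ∈ range k, (1 - x ^ (i + 1))
              ≤ ∏ i ∈ range k, (1 - x ^ (n - i)) := by
            rw [← Finset.prod_range_reflect (fun i => (1 - x ^ (n - i))) k]
            apply Finset.prod_le_prod
            · intro i _
              have : x ^ (i+1) < 1 := pow_lt_one₀ hx0 hq (Nat.succ_ne_zero i)
              linarith
            · intro i hi
              simp only [Finset.mem_range] at hi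
              have h1 : n - (k - 1 - i) = n - k + 1 + i := by omega
              rw [h1]
              have : x ^ (n - k + 1 + i) ≤ x ^ (i + 1) :=
                pow_le_pow_of_le_one hx0 hq.le (by omega)
              linarith
          exact div_le_div_of_nonneg_right hnum hden.le |>.trans_eq rfl
      _ ≤ ∏ i ∈ range k, (1 - q ^ (n - i)) / (1 - q ^ (i + 1)) := by
          apply Finset.prod_le_prod
          · intro i _
            have h1 : x ^ (n - i) ≤ 1 := pow_le_one₀ hx0 hq.le
            have h2 : 0 ≤ x ^ (i+1) := pow_nonneg hx0 _
            apply div_nonneg <;> linarith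
          · intro i _
            have e1 : |q ^ (n - i)| = x ^ (n - i) := by rw [abs_pow]
            have e2 : |q ^ (i + 1)| = x ^ (i + 1) := by rw [abs_pow]
            have b1 : q ^ (n - i) ≤ x ^ (n - i) := e1 ▸ le_abs_self _
            have b2 : q ^ (i + 1) ≤ x ^ (i + 1) := e2 ▸ le_abs_self _
            have b3 : -(x ^ (i + 1)) ≤ q ^ (i + 1) := e2 ▸ neg_abs_le _
            have h1 : x ^ (n - i) ≤ 1 := pow_le_one₀ hx0 hq.le
            have h2 : x ^ (i + 1) < 1 := pow_lt_one₀ hx0 hq (Nat.succ_ne_zero i)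
            apply div_le_div₀
            · linarith
            · linarith
            · linarith
            · linarith
  -- conclude
  have key2 : ∀ k ∈ range (n+1), (P⁻¹)^2 ≤ (qbinom q n k)^2 := by
    intro k hk
    rw [Finset.mem_range] at hk
    exact pow_le_pow_left₀ (inv_nonneg.mpr hP0.le) (key k (by omega)) 2
  calc (P⁻¹)^2 * (n+1) = ∑ _k ∈ range (n+1), (P⁻¹)^2 := by
        rw [Finset.sum_const, Finset.card_range, nsmul_eq_mul]
        push_cast
        ring
    _ ≤ ∑ k ∈ range (n+1), (qbinom q n k)^2 := Finset.sum_le_sum key2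
end

section
/- Let V be a finite-dimensional complex inner product space with positive operators P, Q satisfying Q = P R* and Q ≤ C·P for an operator R and constant C ≥ 1. Then ⟨Q R*ξ, R*ξ⟩ ≤ C² ⟨Qξ, ξ⟩ for all ξ ∈ V; that is, R* is bounded by C in the Q-seminorm. -/
/-- Cauchy–Schwarz for the semi-inner product induced by a positive symmetric operator. -/
lemma Qcauchy {V : Type*} [NormedAddCommGroup V] [InnerProductSpace ℂ V]
    (Q : V →ₗ[ℂ] V) (hQsymm : Q.IsSymmetric)
    (hQpos : ∀ ξ : V, 0 ≤ (inner ℂ (Q ξ) ξ : ℂ).re) (x y : V) :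
    ((inner ℂ (Q x) y : ℂ)).re ^ 2 ≤ (inner ℂ (Q x) x : ℂ).re * (inner ℂ (Q y) y : ℂ).re := by
  set a := (inner ℂ (Q y) y : ℂ).re with ha
  set c := (inner ℂ (Q x) x : ℂ).re with hc
  set r := (inner ℂ (Q x) y : ℂ).re with hr
  have hconj : (inner ℂ (Q y) x : ℂ).re = r := by
    rw [hr, hQsymm y x]
    simpa using inner_re_symm (𝕜 := ℂ) y (Q x)
  have key : ∀ t : ℝ, 0 ≤ a * (t * t) + (2 * r) * t + c := by
    intro t
    have h0 := hQpos (x + (t : ℂ) • y)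
    have hexp : (inner ℂ (Q (x + (t : ℂ) • y)) (x + (t : ℂ) • y) : ℂ).re
        = a * (t * t) + (2 * r) * t + c := by
      simp only [map_add, map_smul, inner_add_left, inner_add_right,
        inner_smul_left, inner_smul_right, Complex.add_re, Complex.mul_re,
        Complex.conj_re, Complex.conj_im, Complex.ofReal_re, Complex.ofReal_im,
        RCLike.star_def]
      rw [← ha, ← hc, ← hr, ← hconj]
      have him : (inner ℂ (Q y) x : ℂ).im = -(inner ℂ (Q x) y : ℂ).im := by
        rw [hQsymm y x]
        simpa using inner_im_symm (𝕜 := ℂ) y (Q x)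
      rw [him]
      ring
    rw [hexp] at h0
    exact h0
  have hd := discrim_le_zero key
  rw [discrim] at hd
  nlinarith [hd]

/-- Let `V` be a finite-dimensional complex inner product space,
`P, Q` positive operators with `Q = P ∘ R*` and `Q ≤ C·P` for an operator `R*`
and a constant `C ≥ 1`.  Then `⟨Q R*ξ, R*ξ⟩ ≤ C² ⟨Qξ, ξ⟩` for all `ξ ∈ V`,
i.e. `R*` is bounded by `C` in the `Q`-seminorm. -/
theorem Qseminorm_Rstar_le {V : Type*} [NormedAddCommGroup V]
    [InnerProductSpace ℂ V] [FiniteDimensional ℂ V]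
    (P Q Rstar : V →ₗ[ℂ] V) (C : ℝ) (hC : 1 ≤ C)
    (hPsymm : P.IsSymmetric) (hQsymm : Q.IsSymmetric)
    (hPpos : ∀ ξ : V, 0 ≤ (inner ℂ (P ξ) ξ : ℂ).re)
    (hQpos : ∀ ξ : V, 0 ≤ (inner ℂ (Q ξ) ξ : ℂ).re)
    (hQR : Q = P ∘ₗ Rstar)
    (hQleCP : ∀ ξ : V, (inner ℂ (Q ξ) ξ : ℂ).re ≤ C * (inner ℂ (P ξ) ξ : ℂ).re) :
    ∀ ξ : V, (inner ℂ (Q (Rstar ξ)) (Rstar ξ) : ℂ).re ≤ C ^ 2 * (inner ℂ (Q ξ) ξ : ℂ).re := by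
  intro ξ
  set a := (inner ℂ (Q (Rstar ξ)) (Rstar ξ) : ℂ).re with haa
  set b := (inner ℂ (Q ξ) ξ : ℂ).re with hbb
  set r := (inner ℂ (Q ξ) (Rstar ξ) : ℂ).re with hrr
  have hPQ : P (Rstar ξ) = Q ξ := by rw [hQR]; rfl
  have h1 : a ≤ C * r := by
    have := hQleCP (Rstar ξ)
    rwa [hPQ] at this
  have hcs : r ^ 2 ≤ b * a := Qcauchy Q hQsymm hQpos ξ (Rstar ξ)
  have ha0 : 0 ≤ a := hQpos _
  have hb0 : 0 ≤ b := hQpos _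
  have hr0 : 0 ≤ C * r := le_trans ha0 h1
  rcases eq_or_lt_of_le ha0 with h | h
  · have : 0 ≤ C ^ 2 * b := mul_nonneg (sq_nonneg C) hb0
    linarith
  · nlinarith [mul_le_mul h1 h1 ha0 hr0, mul_le_mul_of_nonneg_left hcs (sq_nonneg C)]
end
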